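/- Given groups G₁,…,Gₙ with expected costs T_k = T_{G_k} ≥ 0 and success probabilities P_k = P_{G_k} ∈ (0,1], executed one at a time until the first group succeeds, the total expected cost equals Σ_{k=1}^n T_k ∏_{j<k}(1−P_j), and this is minimized over orderings of the groups by sorting the groups in increasing order of the ratio T_k/P_k. -/

import Mathlib

namespace Stmt13Aux

variable {α : Type*} [DecidableEq α] (t p : α → ℝ)

/-- Expected cost of executing a list in order until first success. -/
def C (l : List α) : ℝ := l.foldr (fun a c => t a + (1 - p a) * c) 0

@[simp] lemma C_nil : C t p ([] : List α) = 0 := rfl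

@[simp] lemma C_cons (a : α) (l : List α) :
    C t p (a :: l) = t a + (1 - p a) * C t p l := rfl

variable (ht : ∀ a, 0 ≤ t a) (hp : ∀ a, 0 < p a ∧ p a ≤ 1)

include ht hp in
lemma C_nonneg : ∀ l : List α, 0 ≤ C t p l
  | [] => le_refl 0
  | a :: l => by
    have h1 : 0 ≤ 1 - p a := by linarith [(hp a).2]
    have := C_nonneg l
    simp only [C_cons]
    nlinarith [ht a]

include hp in
lemma C_cons_mono (a : α) {l l' : List α} (h : C t p l ≤ C t p l') :
    C t p (a :: l) ≤ C t p (a :: l') := by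
  have h1 : 0 ≤ 1 - p a := by linarith [(hp a).2]
  simp only [C_cons]
  nlinarith

include ht hp in
lemma C_swap {a b : α} (hab : t a / p a ≤ t b / p b) (l : List α) :
    C t p (a :: b :: l) ≤ C t p (b :: a :: l) := by
  have hpa := (hp a).1
  have hpb := (hp b).1
  have key : t a * p b ≤ t b * p a := by
    rw [div_le_div_iff₀ hpa hpb] at hab; linarith
  simp only [C_cons]
  nlinarith [C_nonneg t p ht hp l]

include ht hp in
lemma C_min_front {a : α} :
    ∀ l : List α, a ∈ l → (∀ x ∈ l, t a / p a ≤ t x / p x) →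
      C t p (a :: l.erase a) ≤ C t p l := by
  intro l
  induction l with
  | nil => intro h; simp at h
  | cons b l ih =>
    intro hmem hmin
    by_cases hab : b = a
    · subst hab; simp [List.erase_cons_head]
    · rw [List.erase_cons_tail (by simpa using hab)]
      have hal : a ∈ l := by
        rcases List.mem_cons.mp hmem with h | h
        · exact absurd h.symm hab
        · exact h
      calc C t p (a :: b :: l.erase a)
          ≤ C t p (b :: a :: l.erase a) :=
            C_swap t p ht hp (hmin b List.mem_cons_self) _
        _ ≤ C t p (b :: l) := C_cons_mono t p hp b
            (ih hal (fun x hx => hmin x (List.mem_cons_of_mem b hx)))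

include ht hp in
lemma C_sorted_le : ∀ l l' : List α, l.Perm l' →
    l.Pairwise (fun x y => t x / p x ≤ t y / p y) → C t p l ≤ C t p l' := by
  intro l
  induction l with
  | nil => intro l' hperm _; rw [← List.Perm.nil_eq hperm]
  | cons a l ih =>
    intro l' hperm hsorted
    have hal' : a ∈ l' := hperm.mem_iff.mp List.mem_cons_self
    have hmin : ∀ x ∈ l', t a / p a ≤ t x / p x := by
      intro x hx
      rcases List.mem_cons.mp (hperm.symm.mem_iff.mp hx) with h | h
      · subst h; exact le_refl _
      · exact (List.pairwise_cons.mp hsorted).1 x h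
    have hperm' : l.Perm (l'.erase a) := by
      have := hperm.erase a
      simpa [List.erase_cons_head] using this
    calc C t p (a :: l) ≤ C t p (a :: l'.erase a) :=
          C_cons_mono t p hp a (ih _ hperm' hsorted.of_cons)
      _ ≤ C t p l' := C_min_front t p ht hp l' hal' hmin

lemma Iio_succ_eq (n : ℕ) (i : Fin n) :
    Finset.Iio (Fin.succ i) = insert 0 ((Finset.Iio i).map (Fin.succEmb n)) := by
  ext j
  simp only [Finset.mem_Iio, Finset.mem_insert, Finset.mem_map, Fin.succEmb]
  constructor
  · intro h
    rcases Fin.eq_zero_or_eq_succ j with h0 | ⟨j', rfl⟩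
    · left; exact h0
    · right; exact ⟨j', by simpa [Fin.succ_lt_succ_iff] using h, rfl⟩
  · rintro (rfl | ⟨j', hj', rfl⟩)
    · exact Fin.succ_pos i
    · simpa [Fin.succ_lt_succ_iff] using hj'

omit [DecidableEq α] in
lemma sum_eq_C :
    ∀ (n : ℕ) (f : Fin n → α),
      (∑ k : Fin n, t (f k) * ∏ j ∈ Finset.Iio k, (1 - p (f j)))
        = C t p (List.ofFn f) := by
  intro n
  induction n with
  | zero => intro f; simp [C]
  | succ n ih =>
    intro f
    rw [Fin.sum_univ_succ, List.ofFn_succ]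
    have h0 : Finset.Iio (0 : Fin (n+1)) = ∅ := by
      ext j; simp [Fin.pos_iff_ne_zero]
    rw [h0]
    have key : ∀ i : Fin n,
        (∏ j ∈ Finset.Iio (Fin.succ i), (1 - p (f j)))
          = (1 - p (f 0)) * ∏ j ∈ Finset.Iio i, (1 - p (f j.succ)) := by
      intro i
      rw [Iio_succ_eq, Finset.prod_insert, Finset.prod_map]
      · rfl
      · simp [Fin.succEmb, Fin.succ_ne_zero]
    have hsum : (∑ i : Fin n, t (f i.succ) * ∏ j ∈ Finset.Iio (Fin.succ i), (1 - p (f j)))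
        = (1 - p (f 0)) * ∑ i : Fin n, t (f (Fin.succ i)) * ∏ j ∈ Finset.Iio i, (1 - p (f (Fin.succ j))) := by
      rw [Finset.mul_sum]
      refine Finset.sum_congr rfl fun i _ => ?_
      rw [key i]; ring
    rw [hsum, ih (fun i => f i.succ)]
    simp [C]

end Stmt13Aux

/-- Executing groups one at a time until the first group succeeds: for any
ordering `σ`, the total expected cost equals `Σₖ T_{σ(k)} ∏_{j<k} (1 - P_{σ(j)})`,
and sorting the groups in increasing order of `T/P` minimizes it. -/
theorem stmt_13 (n : ℕ) (T P : Fin n → ℝ)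
    (hT : ∀ k, 0 ≤ T k)
    (hP : ∀ k, 0 < P k ∧ P k ≤ 1)
    (hsort : ∀ j k : Fin n, j ≤ k → T j / P j ≤ T k / P k) :
    ∀ σ : Equiv.Perm (Fin n),
      (∑ k : Fin n, T k * ∏ j ∈ Finset.Iio k, (1 - P j)) ≤
        ∑ k : Fin n, T (σ k) * ∏ j ∈ Finset.Iio k, (1 - P (σ j)) := by
  intro σ
  have h1 := Stmt13Aux.sum_eq_C T P n id
  have h2 := Stmt13Aux.sum_eq_C T P n σ
  simp only [id] at h1
  rw [h1, h2]
  have hperm : (List.ofFn (fun i => (id i : Fin n))).Perm (List.ofFn σ) := by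
    rw [List.ofFn_id, List.ofFn_eq_map]
    exact (Equiv.Perm.map_finRange_perm σ).symm
  have hsorted : (List.ofFn (fun i => (id i : Fin n))).Pairwise
      (fun x y => T x / P x ≤ T y / P y) := by
    rw [List.ofFn_id]
    exact (List.pairwise_le_finRange n).imp (fun h => hsort _ _ h)
  have := Stmt13Aux.C_sorted_le T P hT hP _ _ hperm hsorted
  exact this
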